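/- (S_3, S_2^≠, [1/4, 1/2), [0, ∞))↓ holds: from every configuration in which robot r is in state S_3 with observed distance in [1/4, 1/2) and robot s satisfies condition S_2^≠ with any observed distance, every fair SSynch execution of Algorithm 1 solves rendezvous. -/

import Mathlib

/-- Points in the plane. -/
abbrev Pt := EuclideanSpace ℝ (Fin 2)

/-- Observed directions. -/
inductive Dir | left | right
deriving DecidableEq

/-- The six internal states of Algorithm 1. -/
inductive St | start | s1 | s2 (d : Dir) | s3 | finish
deriving DecidableEq

/-- A local coordinate frame: an orthogonal linear map of the plane. -/
abbrev Frame := Pt ≃ₗᵢ[ℝ] Pt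

/-- Observed direction of a local vector `v`: `right` if its first coordinate is
positive, or is zero with positive second coordinate; `left` otherwise. -/
noncomputable def obsDir (v : Pt) : Dir :=
  if 0 < v 0 ∨ (v 0 = 0 ∧ 0 < v 1) then Dir.right else Dir.left

/-- Local vector observed by a robot with unit distance `u` and frame `A`,
located at `p`, looking at the other robot at `q`. -/
noncomputable def obsVec (u : ℝ) (A : Frame) (p q : Pt) : Pt := u⁻¹ • (A (q - p))

/-- Observed distance. -/
noncomputable def obsDist (u : ℝ) (p q : Pt) : ℝ := ‖q - p‖ / u

/-- Algorithm 1: given the current state, the observed distance `d` and the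
observed direction `dir`, returns the new state and the coefficient `μ` such
that the (global) destination is `p + μ • (q - p)` (i.e. local destination `μ • v`). -/
noncomputable def algo1 (s : St) (d : ℝ) (dir : Dir) : St × ℝ :=
  if d = 0 then (s, 0)
  else match s with
  | .start => if d < 1 then (.s1, 1 - 1/d) else (.s2 dir, 1)
  | .s1 => if d ≤ 1 then (.finish, 0) else (.s2 dir, 1)
  | .s2 d' =>
      if dir = d' then (.finish, 1)
      else if d < 1/2 then (.finish, 0)
      else if d < 1 then (.s3, 1/2)
      else (.s2 d', 1/2)
  | .s3 => if d < 1/4 then (.finish, 0) else (.finish, 1)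
  | .finish => if d ≤ 1 then (.finish, 0) else (.finish, 1)

/-- A configuration: positions and internal states of the two robots
(robot `r` is `false`, robot `s` is `true`). -/
structure Config where
  pos : Bool → Pt
  st : Bool → St

/-- Result (new position, new state) of one activation of robot `i`. -/
noncomputable def stepRobot (u : Bool → ℝ) (A : Bool → Frame) (c : Config) (i : Bool) :
    Pt × St :=
  let p := c.pos i
  let q := c.pos (!i)
  let d := obsDist (u i) p q
  let dir := obsDir (obsVec (u i) (A i) p q)
  let r := algo1 (c.st i) d dir
  (p + r.2 • (q - p), r.1)

/-- One synchronous round in which exactly the robots `i` with `act i = true`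
are activated; both activated robots observe the same (pre-round) configuration,
and rigidly reach their computed destinations. -/
noncomputable def stepConfig (u : Bool → ℝ) (A : Bool → Frame) (act : Bool → Bool)
    (c : Config) : Config where
  pos i := if act i then (stepRobot u A c i).1 else c.pos i
  st i := if act i then (stepRobot u A c i).2 else c.st i

/-- The configuration after `n` rounds of the SSynch execution of Algorithm 1
under schedule `sched`, starting from `c0`. -/
noncomputable def run (u : Bool → ℝ) (A : Bool → Frame) (sched : ℕ → Bool → Bool)
    (c0 : Config) : ℕ → Config
  | 0 => c0
  | n + 1 => stepConfig u A (sched n) (run u A sched c0 n)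

/-- A legal fair SSynch schedule: at every round a nonempty set of robots is
activated, and each robot is activated infinitely often. -/
def FairSched (sched : ℕ → Bool → Bool) : Prop :=
  (∀ n, sched n false = true ∨ sched n true = true) ∧
  (∀ i n, ∃ m, n ≤ m ∧ sched m i = true)

/-- Rendezvous is solved: from some round on, the two robots occupy the same
point and never move again. -/
noncomputable def Solves (u : Bool → ℝ) (A : Bool → Frame) (sched : ℕ → Bool → Bool)
    (c0 : Config) : Prop :=
  ∃ N : ℕ, ∀ n, N ≤ n → ∀ i, (run u A sched c0 n).pos i = (run u A sched c0 N).pos false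

/-- Conditions on a robot: one of the six internal states, or `S₂⁼` / `S₂≠`. -/
inductive Cond | start | s1 | s2 (d : Dir) | s2eq | s2ne | s3 | finish

/-- A robot in state `s` whose currently observed direction is `dir`
satisfies the condition. -/
def Cond.sat : Cond → St → Dir → Prop
  | .start, s, _ => s = .start
  | .s1, s, _ => s = .s1
  | .s2 d', s, _ => s = .s2 d'
  | .s2eq, s, dir => s = .s2 dir
  | .s2ne, s, dir => ∃ d', s = St.s2 d' ∧ d' ≠ dir
  | .s3, s, _ => s = .s3
  | .finish, s, _ => s = .finish

/-- `(S_a, S_b, I_a, I_b)↓` : for every choice of the units and frames, from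
every configuration in which robot `r` satisfies condition `Ca` with observed
distance in `Ia` and robot `s` satisfies condition `Cb` with observed distance
in `Ib`, every fair SSynch execution of Algorithm 1 solves Rendezvous. -/
noncomputable def Down (Ca Cb : Cond) (Ia Ib : Set ℝ) : Prop :=
  ∀ (u : Bool → ℝ) (A : Bool → Frame), (∀ i, 0 < u i) →
    ∀ c0 : Config,
      Ca.sat (c0.st false)
        (obsDir (obsVec (u false) (A false) (c0.pos false) (c0.pos true))) →
      obsDist (u false) (c0.pos false) (c0.pos true) ∈ Ia →
      Cb.sat (c0.st true)
        (obsDir (obsVec (u true) (A true) (c0.pos true) (c0.pos false))) →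
      obsDist (u true) (c0.pos true) (c0.pos false) ∈ Ib →
      ∀ sched : ℕ → Bool → Bool, FairSched sched → Solves u A sched c0

section Helpers

lemma pt_eq_zero (v : Pt) (h0 : v 0 = 0) (h1 : v 1 = 0) : v = 0 := by
  ext i
  fin_cases i
  · exact h0
  · exact h1

lemma obsDir_smul {c : ℝ} (hc : 0 < c) (v : Pt) : obsDir (c • v) = obsDir v := by
  have h0 : (c • v) 0 = c * v 0 := rfl
  have h1 : (c • v) 1 = c * v 1 := rfl
  unfold obsDir
  rw [h0, h1]
  have e0 : 0 < c * v 0 ↔ 0 < v 0 := by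
    constructor
    · intro h; by_contra hn; push_neg at hn; nlinarith
    · intro h; exact mul_pos hc h
  have e1 : 0 < c * v 1 ↔ 0 < v 1 := by
    constructor
    · intro h; by_contra hn; push_neg at hn; nlinarith
    · intro h; exact mul_pos hc h
  have ez : c * v 0 = 0 ↔ v 0 = 0 := by
    simp [mul_eq_zero, hc.ne']
  simp only [e0, e1, ez]

lemma obsDir_neg (v : Pt) (hv : v ≠ 0) : obsDir (-v) ≠ obsDir v := by
  have h0 : (-v) 0 = -(v 0) := rfl
  have h1 : (-v) 1 = -(v 1) := rfl
  have ncne : ∀ a b : ℝ, a < 0 → ¬(0 < a ∨ (a = 0 ∧ 0 < b)) := by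
    rintro a b ha (h | ⟨h1', h2⟩) <;> linarith
  have ncz : ∀ a b : ℝ, a = 0 → b < 0 → ¬(0 < a ∨ (a = 0 ∧ 0 < b)) := by
    rintro a b ha hb (h | ⟨h1', h2⟩) <;> linarith
  unfold obsDir
  rw [h0, h1]
  rcases lt_trichotomy (v 0) 0 with h | h | h
  · rw [if_pos (Or.inl (by linarith : (0:ℝ) < -(v 0))), if_neg (ncne _ _ h)]
    decide
  · rcases lt_trichotomy (v 1) 0 with h' | h' | h'
    · rw [if_pos (Or.inr ⟨by rw [h, neg_zero], by linarith⟩), if_neg (ncz _ _ h h')]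
      decide
    · exact absurd (pt_eq_zero v h h') hv
    · rw [if_neg (ncz _ _ (by rw [h, neg_zero]) (by linarith)), if_pos (Or.inr ⟨h, h'⟩)]
      decide
  · rw [if_neg (ncne _ _ (by linarith)), if_pos (Or.inl h)]
    decide

lemma dir_resolve {a b c : Dir} (h1 : a ≠ b) (h2 : c ≠ b) : a = c := by
  cases a <;> cases b <;> cases c <;> simp_all

lemma obsVec_smul (u : ℝ) (A : Frame) (p q p' q' : Pt) (t : ℝ)
    (h : q' - p' = t • (q - p)) :
    obsVec u A p' q' = t • obsVec u A p q := by
  unfold obsVec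
  rw [h, map_smul, smul_comm]

lemma obsDist_shift (u : ℝ) (p q p' q' : Pt) (t : ℝ)
    (h : q' - p' = t • (q - p)) :
    obsDist u p' q' = |t| * obsDist u p q := by
  unfold obsDist
  rw [h, norm_smul, Real.norm_eq_abs, mul_div_assoc]

lemma obsDist_flip (u v : ℝ) (hu : u ≠ 0) (hv : v ≠ 0) (p q : Pt) :
    obsDist u p q = (v / u) * obsDist v q p := by
  unfold obsDist
  rw [norm_sub_rev p q]
  field_simp

lemma obsVec_ne_zero (u : ℝ) (A : Frame) (p q : Pt) (hu : u ≠ 0) (hpq : q ≠ p) :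
    obsVec u A p q ≠ 0 := by
  have : ‖obsVec u A p q‖ ≠ 0 := by
    unfold obsVec
    rw [norm_smul, (A).norm_map]
    have h1 : q - p ≠ 0 := sub_ne_zero.mpr hpq
    have := norm_pos_iff.mpr h1
    have : (0:ℝ) < ‖u⁻¹‖ := by
      rw [Real.norm_eq_abs]
      exact abs_pos.mpr (inv_ne_zero hu)
    positivity
  exact fun h => this (by rw [h, norm_zero])

lemma obsDist_pos (u : ℝ) (hu : 0 < u) (p q : Pt) (h : q ≠ p) : 0 < obsDist u p q := by
  unfold obsDist
  have : (0:ℝ) < ‖q - p‖ := norm_pos_iff.mpr (sub_ne_zero.mpr h)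
  positivity

lemma ne_of_obsDist_pos (u : ℝ) (hu : 0 < u) (p q : Pt) (h : 0 < obsDist u p q) : q ≠ p := by
  intro he
  rw [he] at h
  simp [obsDist, sub_self] at h

end Helpers
section StepLemmas

variable (u : Bool → ℝ) (A : Bool → Frame)

lemma sr_fin_small (c : Config) (i : Bool) (hst : c.st i = .finish)
    (hd : obsDist (u i) (c.pos i) (c.pos (!i)) ≤ 1) :
    stepRobot u A c i = (c.pos i, .finish) := by
  by_cases hd0 : obsDist (u i) (c.pos i) (c.pos (!i)) = 0
  · simp only [stepRobot, hst, algo1, if_pos hd0]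
    exact Prod.ext (by module) rfl
  · simp only [stepRobot, hst, algo1, if_neg hd0, if_pos hd]
    exact Prod.ext (by module) rfl

lemma sr_s3_big (c : Config) (i : Bool) (hst : c.st i = .s3)
    (hd : 1/4 ≤ obsDist (u i) (c.pos i) (c.pos (!i))) :
    stepRobot u A c i = (c.pos (!i), .finish) := by
  have hd0 : obsDist (u i) (c.pos i) (c.pos (!i)) ≠ 0 := by intro h; rw [h] at hd; linarith
  have hd4 : ¬ obsDist (u i) (c.pos i) (c.pos (!i)) < 1/4 := by linarith
  simp only [stepRobot, hst, algo1, if_neg hd0, if_neg hd4]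
  exact Prod.ext (by module) rfl

lemma sr_s3_small (c : Config) (i : Bool) (hst : c.st i = .s3)
    (hd0 : 0 < obsDist (u i) (c.pos i) (c.pos (!i)))
    (hd : obsDist (u i) (c.pos i) (c.pos (!i)) < 1/4) :
    stepRobot u A c i = (c.pos i, .finish) := by
  simp only [stepRobot, hst, algo1, if_neg hd0.ne', if_pos hd]
  exact Prod.ext (by module) rfl

lemma sr_s2_eq (c : Config) (i : Bool) (d' : Dir) (hst : c.st i = .s2 d')
    (hd : 0 < obsDist (u i) (c.pos i) (c.pos (!i)))
    (hdir : obsDir (obsVec (u i) (A i) (c.pos i) (c.pos (!i))) = d') :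
    stepRobot u A c i = (c.pos (!i), .finish) := by
  simp only [stepRobot, hst, algo1, if_neg hd.ne', if_pos hdir]
  exact Prod.ext (by module) rfl

lemma sr_s2_small (c : Config) (i : Bool) (d' : Dir) (hst : c.st i = .s2 d')
    (hd0 : 0 < obsDist (u i) (c.pos i) (c.pos (!i)))
    (hd : obsDist (u i) (c.pos i) (c.pos (!i)) < 1/2)
    (hdir : obsDir (obsVec (u i) (A i) (c.pos i) (c.pos (!i))) ≠ d') :
    stepRobot u A c i = (c.pos i, .finish) := by
  simp only [stepRobot, hst, algo1, if_neg hd0.ne', if_neg hdir, if_pos hd]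
  exact Prod.ext (by module) rfl

lemma sr_s2_half_s3 (c : Config) (i : Bool) (d' : Dir) (hst : c.st i = .s2 d')
    (hd1 : 1/2 ≤ obsDist (u i) (c.pos i) (c.pos (!i)))
    (hd2 : obsDist (u i) (c.pos i) (c.pos (!i)) < 1)
    (hdir : obsDir (obsVec (u i) (A i) (c.pos i) (c.pos (!i))) ≠ d') :
    stepRobot u A c i = (c.pos i + (1/2 : ℝ) • (c.pos (!i) - c.pos i), .s3) := by
  have hd0 : obsDist (u i) (c.pos i) (c.pos (!i)) ≠ 0 := by intro h; rw [h] at hd1; linarith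
  have hh : ¬ obsDist (u i) (c.pos i) (c.pos (!i)) < 1/2 := by linarith
  simp only [stepRobot, hst, algo1, if_neg hd0, if_neg hdir, if_neg hh, if_pos hd2]

lemma sr_s2_half_s2 (c : Config) (i : Bool) (d' : Dir) (hst : c.st i = .s2 d')
    (hd1 : 1 ≤ obsDist (u i) (c.pos i) (c.pos (!i)))
    (hdir : obsDir (obsVec (u i) (A i) (c.pos i) (c.pos (!i))) ≠ d') :
    stepRobot u A c i = (c.pos i + (1/2 : ℝ) • (c.pos (!i) - c.pos i), .s2 d') := by
  have hd0 : obsDist (u i) (c.pos i) (c.pos (!i)) ≠ 0 := by intro h; rw [h] at hd1; linarith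
  have hh : ¬ obsDist (u i) (c.pos i) (c.pos (!i)) < 1/2 := by linarith
  have hh1 : ¬ obsDist (u i) (c.pos i) (c.pos (!i)) < 1 := by linarith
  simp only [stepRobot, hst, algo1, if_neg hd0, if_neg hdir, if_neg hh, if_neg hh1]

end StepLemmas
section RunLemmas

variable (u : Bool → ℝ) (A : Bool → Frame)

lemma run_succ (sched : ℕ → Bool → Bool) (c0 : Config) (n : ℕ) :
    run u A sched c0 (n + 1) = stepConfig u A (sched n) (run u A sched c0 n) := rfl

lemma run_add (sched : ℕ → Bool → Bool) (c0 : Config) (k n : ℕ) :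
    run u A sched c0 (k + n) = run u A (fun j => sched (k + j)) (run u A sched c0 k) n := by
  induction n with
  | zero => rfl
  | succ n ih =>
      rw [show k + (n + 1) = (k + n) + 1 by omega, run_succ, run_succ, ih]

lemma fair_shift (sched : ℕ → Bool → Bool) (h : FairSched sched) (k : ℕ) :
    FairSched (fun j => sched (k + j)) := by
  constructor
  · intro n; exact h.1 (k + n)
  · intro i n
    obtain ⟨m, hm1, hm2⟩ := h.2 i (k + n)
    exact ⟨m - k, by omega, by show sched (k + (m - k)) i = true
                               rw [show k + (m - k) = m by omega]; exact hm2⟩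

lemma solves_shift (sched : ℕ → Bool → Bool) (c0 : Config) (k : ℕ)
    (h : Solves u A (fun j => sched (k + j)) (run u A sched c0 k)) :
    Solves u A sched c0 := by
  obtain ⟨N, hN⟩ := h
  refine ⟨k + N, fun n hn i => ?_⟩
  rw [show n = k + (n - k) by omega, run_add, run_add]
  exact hN (n - k) (by omega) i

lemma pos_const_of_eq (c : Config) (h : c.pos false = c.pos true) (act : Bool → Bool) (i : Bool) :
    (stepConfig u A act c).pos i = c.pos i := by
  have hz : ∀ j : Bool, (stepRobot u A c j).1 = c.pos j := by
    intro j
    have hpq : c.pos (!j) - c.pos j = 0 := by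
      cases j <;> simp only [Bool.not_false, Bool.not_true] <;> rw [h] <;> exact sub_self _
    have hd : obsDist (u j) (c.pos j) (c.pos (!j)) = 0 := by
      unfold obsDist; rw [hpq, norm_zero, zero_div]
    simp only [stepRobot, algo1, if_pos hd]
    module
  by_cases ha : act i = true
  · simp [stepConfig, ha, hz]
  · simp [stepConfig, ha]

lemma solves_of_eq (sched : ℕ → Bool → Bool) (c0 : Config) (N : ℕ)
    (h : (run u A sched c0 N).pos false = (run u A sched c0 N).pos true) :
    Solves u A sched c0 := by
  have key : ∀ n, N ≤ n →
      (run u A sched c0 n).pos false = (run u A sched c0 N).pos false ∧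
      (run u A sched c0 n).pos true = (run u A sched c0 N).pos false := by
    intro n hn
    induction n with
    | zero =>
        have : N = 0 := Nat.le_zero.mp hn
        subst this
        exact ⟨rfl, h.symm⟩
    | succ n ih =>
        rcases Nat.lt_or_ge N (n + 1) with hlt | hge
        · have hn' : N ≤ n := by omega
          obtain ⟨h1, h2⟩ := ih hn'
          have heq : (run u A sched c0 n).pos false = (run u A sched c0 n).pos true := by
            rw [h1, h2]
          rw [run_succ]
          rw [pos_const_of_eq u A _ heq, pos_const_of_eq u A _ heq]
          exact ⟨h1, h2⟩
        · have : N = n + 1 := by omega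
          subst this
          exact ⟨rfl, h.symm⟩
  exact ⟨N, fun n hn i => by
    obtain ⟨h1, h2⟩ := key n hn
    cases i
    · exact h1
    · exact h2⟩

lemma until_act (sched : ℕ → Bool → Bool) (hf : FairSched sched) (c0 : Config) (j : Bool)
    (hstep : ∀ act : Bool → Bool, act j = false → stepConfig u A act c0 = c0) :
    ∃ m, sched m j = true ∧ run u A sched c0 m = c0 := by
  have hex : ∃ m, sched m j = true := by
    obtain ⟨m, _, hm⟩ := hf.2 j 0
    exact ⟨m, hm⟩
  refine ⟨Nat.find hex, Nat.find_spec hex, ?_⟩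
  have main : ∀ m, (∀ k, k < m → sched k j = false) → run u A sched c0 m = c0 := by
    intro m
    induction m with
    | zero => intro _; rfl
    | succ n ih =>
        intro hk
        rw [run_succ, ih (fun k hk' => hk k (by omega)), hstep _ (hk n (by omega))]
  refine main _ (fun k hk => ?_)
  have := Nat.find_min hex hk
  cases hkk : sched k j
  · rfl
  · exact absurd hkk this

end RunLemmas
section Freeze

variable (u : Bool → ℝ) (A : Bool → Frame)

lemma stepConfig_eq_self (act : Bool → Bool) (c : Config)
    (h : ∀ i, act i = true → stepRobot u A c i = (c.pos i, c.st i)) :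
    stepConfig u A act c = c := by
  cases c with
  | mk pos st =>
    unfold stepConfig
    congr 1
    · funext i
      by_cases ha : act i = true
      · simp [ha, h i ha]
      · simp [ha]
    · funext i
      by_cases ha : act i = true
      · simp [ha, h i ha]
      · simp [ha]

lemma freeze_r (c0 : Config) (h1 : c0.st false = .finish)
    (h2 : obsDist (u false) (c0.pos false) (c0.pos true) ≤ 1) :
    ∀ act : Bool → Bool, act true = false → stepConfig u A act c0 = c0 := by
  intro act ha
  apply stepConfig_eq_self
  intro i hi
  cases i
  · rw [h1]
    exact sr_fin_small u A c0 false h1 h2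
  · rw [ha] at hi; exact absurd hi (by simp)

lemma freeze_s (c0 : Config) (h1 : c0.st true = .finish)
    (h2 : obsDist (u true) (c0.pos true) (c0.pos false) ≤ 1) :
    ∀ act : Bool → Bool, act false = false → stepConfig u A act c0 = c0 := by
  intro act ha
  apply stepConfig_eq_self
  intro i hi
  cases i
  · rw [ha] at hi; exact absurd hi (by simp)
  · rw [h1]
    exact sr_fin_small u A c0 true h1 h2

-- test of stepConfig field computation
example (act : Bool → Bool) (c0 : Config) (x : Pt) (hT : act true = true)
    (hs : stepRobot u A c0 true = (x, .finish)) :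
    (stepConfig u A act c0).pos true = x ∧ (stepConfig u A act c0).st true = .finish := by
  constructor <;> simp [stepConfig, hT, hs]

end Freeze
section ClassLemmas

variable (u : Bool → ℝ) (A : Bool → Frame)

/-- r finish & frozen, s in s3 with observed distance ≥ 1/4: s will jump onto r. -/
lemma solvesK2' (c0 : Config)
    (h1 : c0.st false = .finish)
    (h2 : obsDist (u false) (c0.pos false) (c0.pos true) ≤ 1)
    (h3 : c0.st true = .s3)
    (h4 : 1/4 ≤ obsDist (u true) (c0.pos true) (c0.pos false))
    (sched : ℕ → Bool → Bool) (hf : FairSched sched) :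
    Solves u A sched c0 := by
  obtain ⟨m, hm, hrun⟩ := until_act u A sched hf c0 true (freeze_r u A c0 h1 h2)
  apply solves_of_eq u A sched c0 (m+1)
  rw [run_succ, hrun]
  have hsT : stepRobot u A c0 true = (c0.pos false, .finish) := sr_s3_big u A c0 true h3 h4
  have hsF : stepRobot u A c0 false = (c0.pos false, .finish) := sr_fin_small u A c0 false h1 h2
  by_cases hmf : sched m false = true <;> simp [stepConfig, hm, hmf, hsT, hsF]

/-- r finish & frozen, s in s2 with matching direction: s will jump onto r. -/
lemma solvesK6 (c0 : Config) (d' : Dir)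
    (h1 : c0.st false = .finish)
    (h2 : obsDist (u false) (c0.pos false) (c0.pos true) ≤ 1)
    (h3 : c0.st true = .s2 d')
    (h4 : obsDir (obsVec (u true) (A true) (c0.pos true) (c0.pos false)) = d')
    (h5 : 0 < obsDist (u true) (c0.pos true) (c0.pos false))
    (sched : ℕ → Bool → Bool) (hf : FairSched sched) :
    Solves u A sched c0 := by
  obtain ⟨m, hm, hrun⟩ := until_act u A sched hf c0 true (freeze_r u A c0 h1 h2)
  apply solves_of_eq u A sched c0 (m+1)
  rw [run_succ, hrun]
  have hsT : stepRobot u A c0 true = (c0.pos false, .finish) := sr_s2_eq u A c0 true d' h3 h5 h4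
  have hsF : stepRobot u A c0 false = (c0.pos false, .finish) := sr_fin_small u A c0 false h1 h2
  by_cases hmf : sched m false = true <;> simp [stepConfig, hm, hmf, hsT, hsF]

/-- r in s3 with distance ≥ 1/4, s finish & frozen: r will jump onto s. -/
lemma solvesK1 (c0 : Config)
    (h1 : c0.st false = .s3)
    (h2 : 1/4 ≤ obsDist (u false) (c0.pos false) (c0.pos true))
    (h3 : c0.st true = .finish)
    (h4 : obsDist (u true) (c0.pos true) (c0.pos false) ≤ 1)
    (sched : ℕ → Bool → Bool) (hf : FairSched sched) :
    Solves u A sched c0 := by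
  obtain ⟨m, hm, hrun⟩ := until_act u A sched hf c0 false (freeze_s u A c0 h3 h4)
  apply solves_of_eq u A sched c0 (m+1)
  rw [run_succ, hrun]
  have hsF : stepRobot u A c0 false = (c0.pos true, .finish) := sr_s3_big u A c0 false h1 h2
  have hsT : stepRobot u A c0 true = (c0.pos true, .finish) := sr_fin_small u A c0 true h3 h4
  by_cases hmt : sched m true = true <;> simp [stepConfig, hm, hmt, hsT, hsF]

/-- both in s3, r close (< 1/4), s far enough (≥ 1/4). -/
lemma solvesK2 (c0 : Config)
    (h1 : c0.st false = .s3)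
    (h2a : 0 < obsDist (u false) (c0.pos false) (c0.pos true))
    (h2b : obsDist (u false) (c0.pos false) (c0.pos true) < 1/4)
    (h3 : c0.st true = .s3)
    (h4 : 1/4 ≤ obsDist (u true) (c0.pos true) (c0.pos false))
    (sched : ℕ → Bool → Bool) (hf : FairSched sched) :
    Solves u A sched c0 := by
  have hsF : stepRobot u A c0 false = (c0.pos false, .finish) := sr_s3_small u A c0 false h1 h2a h2b
  have hsT : stepRobot u A c0 true = (c0.pos false, .finish) := sr_s3_big u A c0 true h3 h4
  by_cases hT : sched 0 true = true
  · apply solves_of_eq u A sched c0 1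
    rw [run_succ]
    by_cases hF : sched 0 false = true <;> simp [stepConfig, hT, hF, hsF, hsT, run]
  · have hF : sched 0 false = true := (hf.1 0).resolve_right hT
    apply solves_shift u A sched c0 1
    have e : run u A sched c0 1 = stepConfig u A (sched 0) c0 := rfl
    rw [e]
    set c1 := stepConfig u A (sched 0) c0 with hc1
    have e1 : c1.pos false = c0.pos false := by simp [hc1, stepConfig, hF, hsF]
    have e2 : c1.pos true = c0.pos true := by simp [hc1, stepConfig, hT]
    have e3 : c1.st false = .finish := by simp [hc1, stepConfig, hF, hsF]
    have e4 : c1.st true = .s3 := by simp [hc1, stepConfig, hT, h3]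
    apply solvesK2' u A c1 e3 ?_ e4 ?_ _ (fair_shift sched hf 1)
    · rw [e1, e2]; linarith
    · rw [e1, e2]; exact h4

end ClassLemmas
section K5

variable (u : Bool → ℝ) (A : Bool → Frame)

/-- r finish & frozen, s in s2≠ with distance in [1/2,1): s halves, becomes s3, then jumps. -/
lemma solvesK5low (c0 : Config)
    (h1 : c0.st false = .finish)
    (h2 : obsDist (u false) (c0.pos false) (c0.pos true) ≤ 1)
    (h3 : ∃ d', c0.st true = .s2 d' ∧
      d' ≠ obsDir (obsVec (u true) (A true) (c0.pos true) (c0.pos false)))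
    (h4 : 1/2 ≤ obsDist (u true) (c0.pos true) (c0.pos false))
    (h5 : obsDist (u true) (c0.pos true) (c0.pos false) < 1)
    (sched : ℕ → Bool → Bool) (hf : FairSched sched) :
    Solves u A sched c0 := by
  obtain ⟨d', hd', hne⟩ := h3
  obtain ⟨m, hm, hrun⟩ := until_act u A sched hf c0 true (freeze_r u A c0 h1 h2)
  apply solves_shift u A sched c0 (m+1)
  have e : run u A sched c0 (m+1) = stepConfig u A (sched m) c0 := by rw [run_succ, hrun]
  rw [e]
  have hsT : stepRobot u A c0 true
      = (c0.pos true + (1/2:ℝ) • (c0.pos false - c0.pos true), .s3) :=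
    sr_s2_half_s3 u A c0 true d' hd' h4 h5 (Ne.symm hne)
  have hsF : stepRobot u A c0 false = (c0.pos false, .finish) := sr_fin_small u A c0 false h1 h2
  set c1 := stepConfig u A (sched m) c0 with hc1
  have e1 : c1.pos false = c0.pos false := by
    by_cases hmf : sched m false = true <;> simp [hc1, stepConfig, hmf, hsF]
  have e2 : c1.pos true = c0.pos true + (1/2:ℝ) • (c0.pos false - c0.pos true) := by
    simp [hc1, stepConfig, hm, hsT]
  have e3 : c1.st false = .finish := by
    by_cases hmf : sched m false = true <;> simp [hc1, stepConfig, hmf, hsF, h1]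
  have e4 : c1.st true = .s3 := by simp [hc1, stepConfig, hm, hsT]
  have hdr1 : obsDist (u false) (c1.pos false) (c1.pos true)
      = |(1/2 : ℝ)| * obsDist (u false) (c0.pos false) (c0.pos true) := by
    apply obsDist_shift
    rw [e1, e2]; module
  have hds1 : obsDist (u true) (c1.pos true) (c1.pos false)
      = |(1/2 : ℝ)| * obsDist (u true) (c0.pos true) (c0.pos false) := by
    apply obsDist_shift
    rw [e1, e2]; module
  rw [show |(1/2:ℝ)| = 1/2 by norm_num] at hdr1 hds1
  apply solvesK2' u A c1 e3 ?_ e4 ?_ _ (fair_shift sched hf (m+1))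
  · rw [hdr1]; linarith
  · rw [hds1]; linarith

/-- r finish & frozen, s in s2≠ with bounded distance. -/
lemma solvesK5 : ∀ n : ℕ, ∀ c0 : Config,
    c0.st false = .finish →
    obsDist (u false) (c0.pos false) (c0.pos true) ≤ 1 →
    (∃ d', c0.st true = .s2 d' ∧
      d' ≠ obsDir (obsVec (u true) (A true) (c0.pos true) (c0.pos false))) →
    1/2 ≤ obsDist (u true) (c0.pos true) (c0.pos false) →
    obsDist (u true) (c0.pos true) (c0.pos false) < 2 ^ n →
    ∀ sched : ℕ → Bool → Bool, FairSched sched → Solves u A sched c0 := by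
  intro n
  induction n with
  | zero =>
      intro c0 h1 h2 h3 h4 h5 sched hf
      exact solvesK5low u A c0 h1 h2 h3 h4 (by simpa using h5) sched hf
  | succ n ih =>
      intro c0 h1 h2 h3 h4 h5 sched hf
      by_cases hds : obsDist (u true) (c0.pos true) (c0.pos false) < 1
      · exact solvesK5low u A c0 h1 h2 h3 h4 hds sched hf
      · push_neg at hds
        obtain ⟨d', hd', hne⟩ := h3
        obtain ⟨m, hm, hrun⟩ := until_act u A sched hf c0 true (freeze_r u A c0 h1 h2)
        apply solves_shift u A sched c0 (m+1)
        have e : run u A sched c0 (m+1) = stepConfig u A (sched m) c0 := by rw [run_succ, hrun]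
        rw [e]
        have hsT : stepRobot u A c0 true
            = (c0.pos true + (1/2:ℝ) • (c0.pos false - c0.pos true), .s2 d') :=
          sr_s2_half_s2 u A c0 true d' hd' hds (fun h => hne h.symm)
        have hsF : stepRobot u A c0 false = (c0.pos false, .finish) :=
          sr_fin_small u A c0 false h1 h2
        set c1 := stepConfig u A (sched m) c0 with hc1
        have e1 : c1.pos false = c0.pos false := by
          by_cases hmf : sched m false = true <;> simp [hc1, stepConfig, hmf, hsF]
        have e2 : c1.pos true = c0.pos true + (1/2:ℝ) • (c0.pos false - c0.pos true) := by
          simp [hc1, stepConfig, hm, hsT]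
        have e3 : c1.st false = .finish := by
          by_cases hmf : sched m false = true <;> simp [hc1, stepConfig, hmf, hsF, h1]
        have e4 : c1.st true = .s2 d' := by simp [hc1, stepConfig, hm, hsT]
        have hdr1 : obsDist (u false) (c1.pos false) (c1.pos true)
            = |(1/2 : ℝ)| * obsDist (u false) (c0.pos false) (c0.pos true) := by
          apply obsDist_shift; rw [e1, e2]; module
        have hds1 : obsDist (u true) (c1.pos true) (c1.pos false)
            = |(1/2 : ℝ)| * obsDist (u true) (c0.pos true) (c0.pos false) := by
          apply obsDist_shift; rw [e1, e2]; module
        rw [show |(1/2:ℝ)| = 1/2 by norm_num] at hdr1 hds1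
        have hvec : obsVec (u true) (A true) (c1.pos true) (c1.pos false)
            = (1/2:ℝ) • obsVec (u true) (A true) (c0.pos true) (c0.pos false) := by
          apply obsVec_smul; rw [e1, e2]; module
        have hdir1 : obsDir (obsVec (u true) (A true) (c1.pos true) (c1.pos false))
            = obsDir (obsVec (u true) (A true) (c0.pos true) (c0.pos false)) := by
          rw [hvec]; exact obsDir_smul (by norm_num) _
        have hp : (2:ℝ) ^ (n+1) = 2 ^ n * 2 := pow_succ 2 n
        apply ih c1 e3 ?_ ⟨d', e4, by rw [hdir1]; exact hne⟩ ?_ ?_ _ (fair_shift sched hf (m+1))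
        · rw [hdr1]; linarith
        · rw [hds1]; linarith
        · rw [hds1]; rw [hp] at h5; linarith

lemma solvesK5' (c0 : Config)
    (h1 : c0.st false = .finish)
    (h2 : obsDist (u false) (c0.pos false) (c0.pos true) ≤ 1)
    (h3 : ∃ d', c0.st true = .s2 d' ∧
      d' ≠ obsDir (obsVec (u true) (A true) (c0.pos true) (c0.pos false)))
    (h4 : 1/2 ≤ obsDist (u true) (c0.pos true) (c0.pos false))
    (sched : ℕ → Bool → Bool) (hf : FairSched sched) :
    Solves u A sched c0 := by
  obtain ⟨n, hn⟩ := pow_unbounded_of_one_lt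
    (obsDist (u true) (c0.pos true) (c0.pos false)) (by norm_num : (1:ℝ) < 2)
  exact solvesK5 u A n c0 h1 h2 h3 h4 hn sched hf

end K5
section K3

variable (u : Bool → ℝ) (A : Bool → Frame)

/-- r in s3 close (<1/4), s in s2≠ with distance in [1/2,1). -/
lemma solvesK3low (c0 : Config)
    (h1 : c0.st false = .s3)
    (h2a : 0 < obsDist (u false) (c0.pos false) (c0.pos true))
    (h2b : obsDist (u false) (c0.pos false) (c0.pos true) < 1/4)
    (h3 : ∃ d', c0.st true = .s2 d' ∧
      d' ≠ obsDir (obsVec (u true) (A true) (c0.pos true) (c0.pos false)))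
    (h4 : 1/2 ≤ obsDist (u true) (c0.pos true) (c0.pos false))
    (h5 : obsDist (u true) (c0.pos true) (c0.pos false) < 1)
    (sched : ℕ → Bool → Bool) (hf : FairSched sched) :
    Solves u A sched c0 := by
  obtain ⟨d', hd', hne⟩ := h3
  have hsF : stepRobot u A c0 false = (c0.pos false, .finish) :=
    sr_s3_small u A c0 false h1 h2a h2b
  apply solves_shift u A sched c0 1
  have e : run u A sched c0 1 = stepConfig u A (sched 0) c0 := rfl
  rw [e]
  set c1 := stepConfig u A (sched 0) c0 with hc1
  by_cases hT : sched 0 true = true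
  · -- s halves and becomes s3
    have hsT : stepRobot u A c0 true
        = (c0.pos true + (1/2:ℝ) • (c0.pos false - c0.pos true), .s3) :=
      sr_s2_half_s3 u A c0 true d' hd' h4 h5 (Ne.symm hne)
    have e1 : c1.pos false = c0.pos false := by
      by_cases hF : sched 0 false = true <;> simp [hc1, stepConfig, hF, hsF]
    have e2 : c1.pos true = c0.pos true + (1/2:ℝ) • (c0.pos false - c0.pos true) := by
      simp [hc1, stepConfig, hT, hsT]
    have e4 : c1.st true = .s3 := by simp [hc1, stepConfig, hT, hsT]
    have hdr1 : obsDist (u false) (c1.pos false) (c1.pos true)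
        = |(1/2 : ℝ)| * obsDist (u false) (c0.pos false) (c0.pos true) := by
      apply obsDist_shift; rw [e1, e2]; module
    have hds1 : obsDist (u true) (c1.pos true) (c1.pos false)
        = |(1/2 : ℝ)| * obsDist (u true) (c0.pos true) (c0.pos false) := by
      apply obsDist_shift; rw [e1, e2]; module
    rw [show |(1/2:ℝ)| = 1/2 by norm_num] at hdr1 hds1
    by_cases hF : sched 0 false = true
    · have e3 : c1.st false = .finish := by simp [hc1, stepConfig, hF, hsF]
      apply solvesK2' u A c1 e3 ?_ e4 ?_ _ (fair_shift sched hf 1)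
      · rw [hdr1]; linarith
      · rw [hds1]; linarith
    · have e3 : c1.st false = .s3 := by simp [hc1, stepConfig, hF, h1]
      apply solvesK2 u A c1 e3 ?_ ?_ e4 ?_ _ (fair_shift sched hf 1)
      · rw [hdr1]; linarith
      · rw [hdr1]; linarith
      · rw [hds1]; linarith
  · -- only r is activated
    have hF : sched 0 false = true := (hf.1 0).resolve_right hT
    have e1 : c1.pos false = c0.pos false := by simp [hc1, stepConfig, hF, hsF]
    have e2 : c1.pos true = c0.pos true := by simp [hc1, stepConfig, hT]
    have e3 : c1.st false = .finish := by simp [hc1, stepConfig, hF, hsF]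
    have e4 : c1.st true = .s2 d' := by simp [hc1, stepConfig, hT, hd']
    apply solvesK5' u A c1 e3 ?_ ⟨d', e4, ?_⟩ ?_ _ (fair_shift sched hf 1)
    · rw [e1, e2]; linarith
    · rw [e1, e2]; exact hne
    · rw [e1, e2]; exact h4

lemma solvesK3 : ∀ n : ℕ, ∀ c0 : Config,
    c0.st false = .s3 →
    0 < obsDist (u false) (c0.pos false) (c0.pos true) →
    obsDist (u false) (c0.pos false) (c0.pos true) < 1/4 →
    (∃ d', c0.st true = .s2 d' ∧
      d' ≠ obsDir (obsVec (u true) (A true) (c0.pos true) (c0.pos false))) →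
    1/2 ≤ obsDist (u true) (c0.pos true) (c0.pos false) →
    obsDist (u true) (c0.pos true) (c0.pos false) < 2 ^ n →
    ∀ sched : ℕ → Bool → Bool, FairSched sched → Solves u A sched c0 := by
  intro n
  induction n with
  | zero =>
      intro c0 h1 h2a h2b h3 h4 h5 sched hf
      exact solvesK3low u A c0 h1 h2a h2b h3 h4 (by simpa using h5) sched hf
  | succ n ih =>
      intro c0 h1 h2a h2b h3 h4 h5 sched hf
      by_cases hds : obsDist (u true) (c0.pos true) (c0.pos false) < 1
      · exact solvesK3low u A c0 h1 h2a h2b h3 h4 hds sched hf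
      · push_neg at hds
        obtain ⟨d', hd', hne⟩ := h3
        have hsF : stepRobot u A c0 false = (c0.pos false, .finish) :=
          sr_s3_small u A c0 false h1 h2a h2b
        apply solves_shift u A sched c0 1
        have e : run u A sched c0 1 = stepConfig u A (sched 0) c0 := rfl
        rw [e]
        set c1 := stepConfig u A (sched 0) c0 with hc1
        by_cases hT : sched 0 true = true
        · have hsT : stepRobot u A c0 true
              = (c0.pos true + (1/2:ℝ) • (c0.pos false - c0.pos true), .s2 d') :=
            sr_s2_half_s2 u A c0 true d' hd' hds (Ne.symm hne)
          have e1 : c1.pos false = c0.pos false := by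
            by_cases hF : sched 0 false = true <;> simp [hc1, stepConfig, hF, hsF]
          have e2 : c1.pos true = c0.pos true + (1/2:ℝ) • (c0.pos false - c0.pos true) := by
            simp [hc1, stepConfig, hT, hsT]
          have e4 : c1.st true = .s2 d' := by simp [hc1, stepConfig, hT, hsT]
          have hdr1 : obsDist (u false) (c1.pos false) (c1.pos true)
              = |(1/2 : ℝ)| * obsDist (u false) (c0.pos false) (c0.pos true) := by
            apply obsDist_shift; rw [e1, e2]; module
          have hds1 : obsDist (u true) (c1.pos true) (c1.pos false)
              = |(1/2 : ℝ)| * obsDist (u true) (c0.pos true) (c0.pos false) := by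
            apply obsDist_shift; rw [e1, e2]; module
          rw [show |(1/2:ℝ)| = 1/2 by norm_num] at hdr1 hds1
          have hvec : obsVec (u true) (A true) (c1.pos true) (c1.pos false)
              = (1/2:ℝ) • obsVec (u true) (A true) (c0.pos true) (c0.pos false) := by
            apply obsVec_smul; rw [e1, e2]; module
          have hdir1 : obsDir (obsVec (u true) (A true) (c1.pos true) (c1.pos false))
              = obsDir (obsVec (u true) (A true) (c0.pos true) (c0.pos false)) := by
            rw [hvec]; exact obsDir_smul (by norm_num) _
          have hp : (2:ℝ) ^ (n+1) = 2 ^ n * 2 := pow_succ 2 n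
          by_cases hF : sched 0 false = true
          · have e3 : c1.st false = .finish := by simp [hc1, stepConfig, hF, hsF]
            apply solvesK5' u A c1 e3 ?_ ⟨d', e4, by rw [hdir1]; exact hne⟩ ?_
              _ (fair_shift sched hf 1)
            · rw [hdr1]; linarith
            · rw [hds1]; linarith
          · have e3 : c1.st false = .s3 := by simp [hc1, stepConfig, hF, h1]
            apply ih c1 e3 ?_ ?_ ⟨d', e4, by rw [hdir1]; exact hne⟩ ?_ ?_
              _ (fair_shift sched hf 1)
            · rw [hdr1]; linarith
            · rw [hdr1]; linarith
            · rw [hds1]; linarith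
            · rw [hds1]; rw [hp] at h5; linarith
        · have hF : sched 0 false = true := (hf.1 0).resolve_right hT
          have e1 : c1.pos false = c0.pos false := by simp [hc1, stepConfig, hF, hsF]
          have e2 : c1.pos true = c0.pos true := by simp [hc1, stepConfig, hT]
          have e3 : c1.st false = .finish := by simp [hc1, stepConfig, hF, hsF]
          have e4 : c1.st true = .s2 d' := by simp [hc1, stepConfig, hT, hd']
          apply solvesK5' u A c1 e3 ?_ ⟨d', e4, ?_⟩ ?_ _ (fair_shift sched hf 1)
          · rw [e1, e2]; linarith
          · rw [e1, e2]; exact hne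
          · rw [e1, e2]; exact h4

lemma solvesK3' (c0 : Config)
    (h1 : c0.st false = .s3)
    (h2a : 0 < obsDist (u false) (c0.pos false) (c0.pos true))
    (h2b : obsDist (u false) (c0.pos false) (c0.pos true) < 1/4)
    (h3 : ∃ d', c0.st true = .s2 d' ∧
      d' ≠ obsDir (obsVec (u true) (A true) (c0.pos true) (c0.pos false)))
    (h4 : 1/2 ≤ obsDist (u true) (c0.pos true) (c0.pos false))
    (sched : ℕ → Bool → Bool) (hf : FairSched sched) :
    Solves u A sched c0 := by
  obtain ⟨n, hn⟩ := pow_unbounded_of_one_lt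
    (obsDist (u true) (c0.pos true) (c0.pos false)) (by norm_num : (1:ℝ) < 2)
  exact solvesK3 u A n c0 h1 h2a h2b h3 h4 hn sched hf

end K3
/-- Lemma 6: `(S_3, S_2^≠, [1/4, 1/2), [0, ∞))↓`. -/
theorem lemma_l7 :
    Down Cond.s3 Cond.s2ne (Set.Ico (1/4 : ℝ) (1/2)) (Set.Ici (0 : ℝ)) := by
  intro u A hu c0 hca hIa hcb _ sched hf
  have h1 : c0.st false = .s3 := hca
  have hcb' : ∃ d', c0.st true = .s2 d' ∧
      d' ≠ obsDir (obsVec (u true) (A true) (c0.pos true) (c0.pos false)) := hcb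
  obtain ⟨hdra, hdrb⟩ := hIa
  have hdr0 : 0 < obsDist (u false) (c0.pos false) (c0.pos true) :=
    lt_of_lt_of_le (by norm_num) hdra
  have hqp : c0.pos true ≠ c0.pos false := ne_of_obsDist_pos (u false) (hu false) _ _ hdr0
  have hds0 : 0 < obsDist (u true) (c0.pos true) (c0.pos false) :=
    obsDist_pos (u true) (hu true) _ _ (Ne.symm hqp)
  obtain ⟨d', hd', hne⟩ := hcb'
  have hsF : stepRobot u A c0 false = (c0.pos true, .finish) :=
    sr_s3_big u A c0 false h1 hdra
  by_cases hT : sched 0 true = true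
  · rcases lt_or_ge (obsDist (u true) (c0.pos true) (c0.pos false)) (1/2) with hds | hds
    · -- ds < 1/2 : s stays put and finishes
      have hsT : stepRobot u A c0 true = (c0.pos true, .finish) :=
        sr_s2_small u A c0 true d' hd' hds0 hds (Ne.symm hne)
      by_cases hF : sched 0 false = true
      · apply solves_of_eq u A sched c0 1
        rw [run_succ]
        simp [stepConfig, hF, hT, hsF, hsT, run]
      · apply solves_shift u A sched c0 1
        have e : run u A sched c0 1 = stepConfig u A (sched 0) c0 := rfl
        rw [e]
        set c1 := stepConfig u A (sched 0) c0 with hc1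
        have e1 : c1.pos false = c0.pos false := by simp [hc1, stepConfig, hF]
        have e2 : c1.pos true = c0.pos true := by simp [hc1, stepConfig, hT, hsT]
        have e3 : c1.st false = .s3 := by simp [hc1, stepConfig, hF, h1]
        have e4 : c1.st true = .finish := by simp [hc1, stepConfig, hT, hsT]
        apply solvesK1 u A c1 e3 ?_ e4 ?_ _ (fair_shift sched hf 1)
        · rw [e1, e2]; exact hdra
        · rw [e1, e2]; linarith
    · rcases lt_or_ge (obsDist (u true) (c0.pos true) (c0.pos false)) 1 with hds1 | hds1
      · -- 1/2 ≤ ds < 1 : s moves to the midpoint and becomes s3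
        have hsT : stepRobot u A c0 true
            = (c0.pos true + (1/2:ℝ) • (c0.pos false - c0.pos true), .s3) :=
          sr_s2_half_s3 u A c0 true d' hd' hds hds1 (Ne.symm hne)
        apply solves_shift u A sched c0 1
        have e : run u A sched c0 1 = stepConfig u A (sched 0) c0 := rfl
        rw [e]
        set c1 := stepConfig u A (sched 0) c0 with hc1
        have e2 : c1.pos true = c0.pos true + (1/2:ℝ) • (c0.pos false - c0.pos true) := by
          simp [hc1, stepConfig, hT, hsT]
        have e4 : c1.st true = .s3 := by simp [hc1, stepConfig, hT, hsT]
        by_cases hF : sched 0 false = true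
        · -- r jumps onto s's old position
          have e1 : c1.pos false = c0.pos true := by simp [hc1, stepConfig, hF, hsF]
          have e3 : c1.st false = .finish := by simp [hc1, stepConfig, hF, hsF]
          have hdr1 : obsDist (u false) (c1.pos false) (c1.pos true)
              = |(-1/2 : ℝ)| * obsDist (u false) (c0.pos false) (c0.pos true) := by
            apply obsDist_shift; rw [e1, e2]; module
          have hds1' : obsDist (u true) (c1.pos true) (c1.pos false)
              = |(-1/2 : ℝ)| * obsDist (u true) (c0.pos true) (c0.pos false) := by
            apply obsDist_shift; rw [e1, e2]; module
          rw [show |(-1/2:ℝ)| = 1/2 by norm_num] at hdr1 hds1'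
          apply solvesK2' u A c1 e3 ?_ e4 ?_ _ (fair_shift sched hf 1)
          · rw [hdr1]; linarith
          · rw [hds1']; linarith
        · -- r not activated
          have e1 : c1.pos false = c0.pos false := by simp [hc1, stepConfig, hF]
          have e3 : c1.st false = .s3 := by simp [hc1, stepConfig, hF, h1]
          have hdr1 : obsDist (u false) (c1.pos false) (c1.pos true)
              = |(1/2 : ℝ)| * obsDist (u false) (c0.pos false) (c0.pos true) := by
            apply obsDist_shift; rw [e1, e2]; module
          have hds1' : obsDist (u true) (c1.pos true) (c1.pos false)
              = |(1/2 : ℝ)| * obsDist (u true) (c0.pos true) (c0.pos false) := by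
            apply obsDist_shift; rw [e1, e2]; module
          rw [show |(1/2:ℝ)| = 1/2 by norm_num] at hdr1 hds1'
          apply solvesK2 u A c1 e3 ?_ ?_ e4 ?_ _ (fair_shift sched hf 1)
          · rw [hdr1]; linarith
          · rw [hdr1]; linarith
          · rw [hds1']; linarith
      · -- ds ≥ 1 : s moves to the midpoint, stays in s2 d'
        have hsT : stepRobot u A c0 true
            = (c0.pos true + (1/2:ℝ) • (c0.pos false - c0.pos true), .s2 d') :=
          sr_s2_half_s2 u A c0 true d' hd' hds1 (Ne.symm hne)
        apply solves_shift u A sched c0 1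
        have e : run u A sched c0 1 = stepConfig u A (sched 0) c0 := rfl
        rw [e]
        set c1 := stepConfig u A (sched 0) c0 with hc1
        have e2 : c1.pos true = c0.pos true + (1/2:ℝ) • (c0.pos false - c0.pos true) := by
          simp [hc1, stepConfig, hT, hsT]
        have e4 : c1.st true = .s2 d' := by simp [hc1, stepConfig, hT, hsT]
        by_cases hF : sched 0 false = true
        · -- r jumps onto s's old position; s's observed direction flips
          have e1 : c1.pos false = c0.pos true := by simp [hc1, stepConfig, hF, hsF]
          have e3 : c1.st false = .finish := by simp [hc1, stepConfig, hF, hsF]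
          have hdr1 : obsDist (u false) (c1.pos false) (c1.pos true)
              = |(-1/2 : ℝ)| * obsDist (u false) (c0.pos false) (c0.pos true) := by
            apply obsDist_shift; rw [e1, e2]; module
          have hds1' : obsDist (u true) (c1.pos true) (c1.pos false)
              = |(-1/2 : ℝ)| * obsDist (u true) (c0.pos true) (c0.pos false) := by
            apply obsDist_shift; rw [e1, e2]; module
          rw [show |(-1/2:ℝ)| = 1/2 by norm_num] at hdr1 hds1'
          have hvec : obsVec (u true) (A true) (c1.pos true) (c1.pos false)
              = (-1/2:ℝ) • obsVec (u true) (A true) (c0.pos true) (c0.pos false) := by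
            apply obsVec_smul; rw [e1, e2]; module
          have hv0 : obsVec (u true) (A true) (c0.pos true) (c0.pos false) ≠ 0 :=
            obsVec_ne_zero (u true) (A true) _ _ (hu true).ne' (Ne.symm hqp)
          have hflip : obsDir (obsVec (u true) (A true) (c1.pos true) (c1.pos false))
              = obsDir (-(obsVec (u true) (A true) (c0.pos true) (c0.pos false))) := by
            rw [hvec, show ((-1/2:ℝ)) • obsVec (u true) (A true) (c0.pos true) (c0.pos false)
                = (1/2:ℝ) • (-(obsVec (u true) (A true) (c0.pos true) (c0.pos false))) by module]
            exact obsDir_smul (by norm_num) _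
          have hdir : obsDir (obsVec (u true) (A true) (c1.pos true) (c1.pos false)) = d' := by
            rw [hflip]
            exact (dir_resolve hne (obsDir_neg _ hv0)).symm
          apply solvesK6 u A c1 d' e3 ?_ e4 hdir ?_ _ (fair_shift sched hf 1)
          · rw [hdr1]; linarith
          · rw [hds1']; linarith
        · -- r not activated → K3
          have e1 : c1.pos false = c0.pos false := by simp [hc1, stepConfig, hF]
          have e3 : c1.st false = .s3 := by simp [hc1, stepConfig, hF, h1]
          have hdr1 : obsDist (u false) (c1.pos false) (c1.pos true)
              = |(1/2 : ℝ)| * obsDist (u false) (c0.pos false) (c0.pos true) := by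
            apply obsDist_shift; rw [e1, e2]; module
          have hds1' : obsDist (u true) (c1.pos true) (c1.pos false)
              = |(1/2 : ℝ)| * obsDist (u true) (c0.pos true) (c0.pos false) := by
            apply obsDist_shift; rw [e1, e2]; module
          rw [show |(1/2:ℝ)| = 1/2 by norm_num] at hdr1 hds1'
          have hvec : obsVec (u true) (A true) (c1.pos true) (c1.pos false)
              = (1/2:ℝ) • obsVec (u true) (A true) (c0.pos true) (c0.pos false) := by
            apply obsVec_smul; rw [e1, e2]; module
          have hdir1 : obsDir (obsVec (u true) (A true) (c1.pos true) (c1.pos false))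
              = obsDir (obsVec (u true) (A true) (c0.pos true) (c0.pos false)) := by
            rw [hvec]; exact obsDir_smul (by norm_num) _
          apply solvesK3' u A c1 e3 ?_ ?_ ⟨d', e4, by rw [hdir1]; exact hne⟩ ?_
            _ (fair_shift sched hf 1)
          · rw [hdr1]; linarith
          · rw [hdr1]; linarith
          · rw [hds1']; linarith
  · -- only r is activated: it jumps onto s
    have hF := (hf.1 0).resolve_right hT
    apply solves_of_eq u A sched c0 1
    rw [run_succ]
    simp [stepConfig, hF, hT, hsF, run]
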